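/- If e is a bridge of a connected graph G with an even number of vertices, and the two components of G − e both have even order, then the union of perfect forests of the two components is a perfect forest of G. -/

import Mathlib

open SimpleGraph

/-- `F` is a perfect forest of `G` relative to the vertex set `S`: a forest contained in
`G`, with all edges inside `S`, all vertices of `S` of odd degree, and each component
induced. -/
def IsPerfectForestOn {V : Type*} (G F : SimpleGraph V) (S : Set V) : Prop :=
  F ≤ G ∧ F.support ⊆ S ∧ F.IsAcyclic ∧
    (∀ v ∈ S, Odd ((F.neighborSet v).ncard)) ∧
    (∀ x ∈ S, ∀ y ∈ S, G.Adj x y → F.Reachable x y → F.Adj x y)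

private lemma walk_reach_left {V : Type*} {F₁ F₂ : SimpleGraph V} {A B : Set V}
    (h1 : F₁.support ⊆ A) (h2 : F₂.support ⊆ B) (hd : ∀ x, x ∈ A → x ∈ B → False) :
    ∀ {x y : V}, (F₁ ⊔ F₂).Walk x y → x ∈ A → F₁.Reachable x y := by
  intro x y w
  induction w with
  | nil => exact fun _ => Reachable.refl _
  | @cons a c b hac p ih =>
    intro ha
    rcases (sup_adj _ _ _ _).mp hac with h | h
    · have hc : c ∈ A := h1 (F₁.mem_support.mpr ⟨a, h.symm⟩)
      exact (h.reachable).trans (ih hc)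
    · exact absurd (h2 (F₂.mem_support.mpr ⟨c, h⟩)) (fun hb => hd a ha hb)

private lemma reach_left {V : Type*} {F₁ F₂ : SimpleGraph V} {A B : Set V}
    (h1 : F₁.support ⊆ A) (h2 : F₂.support ⊆ B) (hd : ∀ x, x ∈ A → x ∈ B → False)
    {x y : V} (hr : (F₁ ⊔ F₂).Reachable x y) (hx : x ∈ A) : F₁.Reachable x y :=
  hr.elim fun w => walk_reach_left h1 h2 hd w hx

private lemma bridge_left {V : Type*} {F₁ F₂ : SimpleGraph V} {A B : Set V}
    (h1 : F₁.support ⊆ A) (h2 : F₂.support ⊆ B) (hd : ∀ x, x ∈ A → x ∈ B → False)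
    (hac : F₁.IsAcyclic) {x y : V} (hxy : F₁.Adj x y) :
    (F₁ ⊔ F₂).IsBridge s(x, y) := by
  rw [isBridge_iff]
  intro hr
  have hb := isAcyclic_iff_forall_edge_isBridge.mp hac (F₁.mem_edgeSet.mpr hxy)
  rw [isBridge_iff] at hb
  have hle : (F₁ ⊔ F₂) \ fromEdgeSet {s(x, y)} ≤
      (F₁.deleteEdges {s(x, y)}) ⊔ F₂ := by
    intro a b hab
    have hab' : (F₁ ⊔ F₂).Adj a b ∧ s(a, b) ∉ ({s(x, y)} : Set (Sym2 V)) := by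
      simpa [deleteEdges_adj] using
        (deleteEdges_adj (G := F₁ ⊔ F₂) (s := {s(x, y)})).mp hab
    rcases hab' with ⟨hab1 | hab2, hne⟩
    · exact Or.inl (deleteEdges_adj.mpr ⟨hab1, hne⟩)
    · exact Or.inr hab2
  have hsup : (F₁.deleteEdges {s(x, y)}).support ⊆ A :=
    (support_mono (deleteEdges_le _)).trans h1
  have hx : x ∈ A := h1 (F₁.mem_support.mpr ⟨y, hxy⟩)
  have := reach_left hsup h2 hd (hr.mono hle) hx
  exact hb this

private lemma cover_aux {V : Type*} {G : SimpleGraph V} {u v : V} :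
    ∀ {a b : V}, G.Walk a b →
      ((G.deleteEdges {s(u, v)}).Reachable u a ∨ (G.deleteEdges {s(u, v)}).Reachable v a) →
      ((G.deleteEdges {s(u, v)}).Reachable u b ∨ (G.deleteEdges {s(u, v)}).Reachable v b) := by
  intro a b w
  induction w with
  | nil => exact id
  | @cons a c b hac p ih =>
    intro ha
    apply ih
    by_cases he : s(a, c) = s(u, v)
    · rw [Sym2.eq_iff] at he
      rcases he with ⟨rfl, rfl⟩ | ⟨rfl, rfl⟩
      · exact Or.inr (Reachable.refl _)
      · exact Or.inl (Reachable.refl _)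
    · have hadj : (G.deleteEdges {s(u, v)}).Adj a c :=
        deleteEdges_adj.mpr ⟨hac, by simpa using he⟩
      rcases ha with h | h
      · exact Or.inl (h.trans hadj.reachable)
      · exact Or.inr (h.trans hadj.reachable)

/-- If e is a bridge of a connected graph G of even order whose deletion leaves two
components of even order, then the union of perfect forests of the two components is a
perfect forest of G. -/
theorem stmt5 {V : Type*} [Fintype V] (G : SimpleGraph V)
    (hG : G.Connected) (heven : Even (Fintype.card V))
    (u v : V) (huv : G.Adj u v) (hbridge : G.IsBridge s(u, v))
    (hA : Even {x : V | (G.deleteEdges {s(u, v)}).Reachable u x}.ncard)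
    (hB : Even {x : V | (G.deleteEdges {s(u, v)}).Reachable v x}.ncard)
    (F₁ F₂ : SimpleGraph V)
    (hF₁ : IsPerfectForestOn (G.deleteEdges {s(u, v)}) F₁
      {x : V | (G.deleteEdges {s(u, v)}).Reachable u x})
    (hF₂ : IsPerfectForestOn (G.deleteEdges {s(u, v)}) F₂
      {x : V | (G.deleteEdges {s(u, v)}).Reachable v x}) :
    IsPerfectForestOn G (F₁ ⊔ F₂) Set.univ := by
  set G' := G.deleteEdges {s(u, v)} with hG'def
  set A : Set V := {x : V | G'.Reachable u x} with hAdef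
  set B : Set V := {x : V | G'.Reachable v x} with hBdef
  obtain ⟨hF1le, hF1supp, hF1ac, hF1odd, hF1ind⟩ := hF₁
  obtain ⟨hF2le, hF2supp, hF2ac, hF2odd, hF2ind⟩ := hF₂
  have hnr : ¬ G'.Reachable u v := (isBridge_iff.mp hbridge)
  have hd : ∀ x, x ∈ A → x ∈ B → False := fun x hx hy => hnr (hx.trans hy.symm)
  have hd' : ∀ x, x ∈ B → x ∈ A → False := fun x hx hy => hd x hy hx
  have hcov : ∀ x, x ∈ A ∨ x ∈ B := by
    intro x
    exact (hG.preconnected u x).elim fun w =>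
      cover_aux w (Or.inl (Reachable.refl u))
  refine ⟨sup_le (hF1le.trans (deleteEdges_le _)) (hF2le.trans (deleteEdges_le _)),
    Set.subset_univ _, ?_, ?_, ?_⟩
  · -- acyclic
    rw [isAcyclic_iff_forall_edge_isBridge]
    intro e he
    induction e with
    | h x y =>
      rcases (sup_adj _ _ _ _).mp he with h | h
      · exact bridge_left hF1supp hF2supp hd hF1ac h
      · have := bridge_left hF2supp hF1supp hd' hF2ac h
        rwa [sup_comm] at this
  · -- odd degrees
    intro w _
    rcases hcov w with hw | hw
    · have hn : (F₁ ⊔ F₂).neighborSet w = F₁.neighborSet w := by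
        ext z
        simp only [mem_neighborSet, sup_adj]
        constructor
        · rintro (h | h)
          · exact h
          · exact absurd (hF2supp (F₂.mem_support.mpr ⟨z, h⟩)) (fun hb => hd w hw hb)
        · exact Or.inl
      rw [hn]; exact hF1odd w hw
    · have hn : (F₁ ⊔ F₂).neighborSet w = F₂.neighborSet w := by
        ext z
        simp only [mem_neighborSet, sup_adj]
        constructor
        · rintro (h | h)
          · exact absurd (hF1supp (F₁.mem_support.mpr ⟨z, h⟩)) (fun ha => hd w ha hw)
          · exact h
        · exact Or.inr
      rw [hn]; exact hF2odd w hw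
  · -- induced
    intro x _ y _ hGxy hrxy
    rcases hcov x with hx | hx
    · have hr1 : F₁.Reachable x y := reach_left hF1supp hF2supp hd hrxy hx
      have hy : y ∈ A := hx.trans (hr1.mono hF1le)
      have hne : s(x, y) ≠ s(u, v) := by
        intro h
        rw [Sym2.eq_iff] at h
        rcases h with ⟨rfl, rfl⟩ | ⟨rfl, rfl⟩
        · exact hnr hy
        · exact hnr hx
      have hG'xy : G'.Adj x y := deleteEdges_adj.mpr ⟨hGxy, by simpa using hne⟩
      exact Or.inl (hF1ind x hx y hy hG'xy hr1)
    · have hrxy' : (F₂ ⊔ F₁).Reachable x y := by rwa [sup_comm] at hrxy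
      have hr2 : F₂.Reachable x y := reach_left hF2supp hF1supp hd' hrxy' hx
      have hy : y ∈ B := hx.trans (hr2.mono hF2le)
      have hne : s(x, y) ≠ s(u, v) := by
        intro h
        rw [Sym2.eq_iff] at h
        rcases h with ⟨rfl, rfl⟩ | ⟨rfl, rfl⟩
        · exact hnr hx.symm
        · exact hnr hy.symm
      have hG'xy : G'.Adj x y := deleteEdges_adj.mpr ⟨hGxy, by simpa using hne⟩
      exact Or.inr (hF2ind x hx y hy hG'xy hr2)
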